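/- Let m : [0, ∞) → ℝ be C² with m(0) = 0, m''(r) = (1/2) V(r) m(r) for 0 ≤ r ≤ R̃, m'(R̃) = 1, and 0 < m(r) ≤ r for all 0 < r ≤ R̃, where V ≥ 0. Then for all 0 ≤ r ≤ R̃ one has m'(r) ≥ 1 - (1/2)∫₀^∞ s V(s) ds, and consequently m(r) ≥ r (1 - (1/2)∫₀^∞ s V(s) ds). -/
import Mathlib


open MeasureTheory

/-- If `m` is `C²` with `m(0) = 0`, `m'' = (1/2) V m` on `[0, R̃]`, `m'(R̃) = 1`
and `0 < m(r) ≤ r` on `(0, R̃]`, with `V ≥ 0`, then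
`m'(r) ≥ 1 - (1/2)∫₀^∞ s V(s) ds` and `m(r) ≥ r (1 - (1/2)∫₀^∞ s V(s) ds)` on `[0, R̃]`. -/
theorem radial_scattering_derivative_lower_bound
    (V m : ℝ → ℝ) (Rt : ℝ) (hRt : 0 < Rt)
    (hV : ∀ s, 0 ≤ V s) (hVcont : Continuous V)
    (hVint : IntegrableOn (fun s => s * V s) (Set.Ioi (0 : ℝ)))
    (hm : ContDiff ℝ 2 m) (hm0 : m 0 = 0)
    (hode : ∀ r ∈ Set.Icc (0 : ℝ) Rt, deriv (deriv m) r = (1/2) * V r * m r)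
    (hm1 : deriv m Rt = 1)
    (hbound : ∀ r ∈ Set.Ioc (0 : ℝ) Rt, 0 < m r ∧ m r ≤ r) :
    ∀ r ∈ Set.Icc (0 : ℝ) Rt,
      1 - (1/2) * (∫ s in Set.Ioi (0 : ℝ), s * V s) ≤ deriv m r ∧
      r * (1 - (1/2) * (∫ s in Set.Ioi (0 : ℝ), s * V s)) ≤ m r := by
  have hm2 : ContDiff ℝ ((1 : WithTop ℕ∞) + 1) m := by
    have : ((1 : WithTop ℕ∞) + 1) = 2 := by norm_num
    rw [this]; exact hm
  obtain ⟨hmd, -, hm1'⟩ := contDiff_succ_iff_deriv.mp hm2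
  obtain ⟨hmd', hcont''⟩ := contDiff_one_iff_deriv.mp hm1'
  set I := ∫ s in Set.Ioi (0 : ℝ), s * V s with hI
  have hVnn : 0 ≤ᵐ[volume.restrict (Set.Ioi (0:ℝ))] fun s => s * V s := by
    filter_upwards [ae_restrict_mem measurableSet_Ioi] with s hs
    exact mul_nonneg (le_of_lt hs) (hV s)
  have key : ∀ r ∈ Set.Icc (0:ℝ) Rt, 1 - (1/2) * I ≤ deriv m r := by
    intro r hr
    obtain ⟨hr0, hrR⟩ := hr
    have hftc : ∫ s in r..Rt, deriv (deriv m) s = deriv m Rt - deriv m r :=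
      intervalIntegral.integral_deriv_eq_sub (fun x _ => hmd' x)
        (hcont''.intervalIntegrable r Rt)
    have hcongr : ∫ s in r..Rt, deriv (deriv m) s = ∫ s in r..Rt, (1/2) * V s * m s := by
      apply intervalIntegral.integral_congr
      intro s hs
      rw [Set.uIcc_of_le hrR] at hs
      exact hode s ⟨le_trans hr0 hs.1, hs.2⟩
    have hmono : ∫ s in r..Rt, (1/2) * V s * m s ≤ ∫ s in r..Rt, (1/2) * (s * V s) := by
      apply intervalIntegral.integral_mono_on hrR
      · exact (((continuous_const.mul hVcont).mul hm.continuous)).intervalIntegrable r Rt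
      · exact ((continuous_const.mul (continuous_id.mul hVcont))).intervalIntegrable r Rt
      · intro s hs
        have hs0 : (0:ℝ) ≤ s := le_trans hr0 hs.1
        have hms : m s ≤ s := by
          rcases eq_or_lt_of_le hs0 with h | h
          · simp [← h, hm0]
          · exact (hbound s ⟨h, hs.2⟩).2
        nlinarith [mul_le_mul_of_nonneg_left hms (hV s)]
    have htail : ∫ s in r..Rt, (1/2) * (s * V s) ≤ (1/2) * I := by
      rw [intervalIntegral.integral_of_le hrR, integral_const_mul]
      have hsub : ∫ s in Set.Ioc r Rt, s * V s ≤ I := by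
        apply setIntegral_mono_set hVint hVnn
        refine Filter.Eventually.of_forall (fun s hs => ?_)
        exact lt_of_le_of_lt hr0 hs.1
      linarith
    have : deriv m r = 1 - ∫ s in r..Rt, deriv (deriv m) s := by
      rw [hftc, hm1]; ring
    rw [this, hcongr]
    linarith
  intro r hr
  obtain ⟨hr0, hrR⟩ := hr
  refine ⟨key r ⟨hr0, hrR⟩, ?_⟩
  have hftc2 : ∫ s in (0:ℝ)..r, deriv m s = m r - m 0 :=
    intervalIntegral.integral_deriv_eq_sub (fun x _ => hmd x)
      (hm1'.continuous.intervalIntegrable 0 r)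
  have hmono2 : ∫ s in (0:ℝ)..r, (1 - (1/2) * I) ≤ ∫ s in (0:ℝ)..r, deriv m s := by
    apply intervalIntegral.integral_mono_on hr0
    · exact continuous_const.intervalIntegrable 0 r
    · exact (hm1'.continuous.intervalIntegrable 0 r)
    · intro s hs
      exact key s ⟨hs.1, le_trans hs.2 hrR⟩
  rw [intervalIntegral.integral_const] at hmono2
  simp only [smul_eq_mul, sub_zero] at hmono2
  rw [hftc2, hm0, sub_zero] at hmono2
  linarith
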